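/- Two-well model in the plane: let F>0, E<0, m=1, R > 2r > 0, θ ∈ [0, π/2], and let D₁, D₂ ⊂ ℝ² be the closed disks of radius r centred at c₁ = (−(R/2)·sin θ, (R/2)·(1 − cos θ)) and c₂ = ((R/2)·sin θ, (R/2)·(1 + cos θ)), and assume (R/2)·(1 − cos θ) − r > E/F (so both disks lie strictly above the line x₂ = E/F). Define the Agmon length of a C¹ path γ:[0,1]→ℝ² by L_A(γ) = √2·∫₀¹ (max(F·γ₂(t) − E, 0))^{1/2}·𝟙[γ(t) ∉ D₁∪D₂]·‖γ'(t)‖ dt (the integrand vanishes inside the wells, where the potential is −∞). Then the Agmon distance from ∂D₁ ∪ ∂D₂ to the line S_E^+ = {x ∈ ℝ² : x₂ = E/F}, i.e. the infimum of L_A over C¹ paths from ∂D₁ ∪ ∂D₂ to S_E^+, equals (1/(3F))·(F·R·(1 − cos θ) − 2Fr − 2E)^{3/2}; in the limit r → 0 this yields the tunnelling-rate exponent Γ ∝ exp{−(2/(3F))·[F·R·(1 − cos θ) − 2E]^{3/2}} of Eq. (33). -/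

import Mathlib

open MeasureTheory Real Classical

lemma coord_le_norm (v : EuclideanSpace ℝ (Fin 2)) (i : Fin 2) : |v i| ≤ ‖v‖ := by
  have h := EuclideanSpace.norm_eq v
  rw [h]
  have h2 : |v i| = Real.sqrt (‖v i‖ ^ 2) := by rw [Real.sqrt_sq_eq_abs]; simp
  rw [h2]
  apply Real.sqrt_le_sqrt
  exact Finset.single_le_sum (f := fun j => ‖v j‖ ^ 2) (fun j _ => by positivity)
    (Finset.mem_univ i)

lemma hasDerivAt_H (z : ℝ) :
    HasDerivAt (fun z => Real.sqrt (max z 0) ^ 3) (3 / 2 * Real.sqrt (max z 0)) z := by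
  rcases lt_trichotomy z 0 with hz | hz | hz
  · have hev : (fun z : ℝ => Real.sqrt (max z 0) ^ 3) =ᶠ[nhds z] fun _ => 0 := by
      filter_upwards [eventually_lt_nhds hz] with y hy
      rw [max_eq_right hy.le, Real.sqrt_zero]; ring
    have : HasDerivAt (fun _ : ℝ => (0:ℝ)) (3 / 2 * Real.sqrt (max z 0)) z := by
      rw [max_eq_right hz.le, Real.sqrt_zero, mul_zero]
      exact hasDerivAt_const z 0
    exact this.congr_of_eventuallyEq hev
  · subst hz
    rw [max_self, Real.sqrt_zero, mul_zero]
    rw [hasDerivAt_iff_tendsto_slope]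
    have hb : ∀ᶠ y in nhdsWithin (0:ℝ) {(0:ℝ)}ᶜ,
        ‖slope (fun z => Real.sqrt (max z 0) ^ 3) 0 y‖ ≤ Real.sqrt |y| := by
      filter_upwards [self_mem_nhdsWithin] with y hy
      have hy0 : y ≠ 0 := hy
      rw [slope_def_field]
      rcases le_or_gt y 0 with h | h
      · rw [max_eq_right h, Real.sqrt_zero]
        simp [Real.sqrt_nonneg]
      · rw [max_eq_left h.le]
        have : (Real.sqrt y ^ 3 - Real.sqrt (max 0 0) ^ 3) / (y - 0) = Real.sqrt y := by
          rw [max_self, Real.sqrt_zero]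
          field_simp
          rw [pow_succ, Real.sq_sqrt h.le]
          ring
        rw [this, Real.norm_eq_abs, abs_of_nonneg (Real.sqrt_nonneg _), abs_of_pos h]
    refine squeeze_zero_norm' hb ?_
    have : Filter.Tendsto (fun y : ℝ => Real.sqrt |y|) (nhds 0) (nhds 0) := by
      have := (Real.continuous_sqrt.comp continuous_abs).tendsto (0:ℝ)
      simpa [Function.comp_def] using this
    exact this.mono_left nhdsWithin_le_nhds
  · have hev : (fun z : ℝ => Real.sqrt (max z 0) ^ 3) =ᶠ[nhds z] fun y => Real.sqrt y ^ 3 := by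
      filter_upwards [eventually_gt_nhds hz] with y hy
      rw [max_eq_left hy.le]
    have h1 : HasDerivAt (fun y : ℝ => Real.sqrt y ^ 3)
        (3 * Real.sqrt z ^ 2 * (1 / (2 * Real.sqrt z))) z := by
      simpa [Pi.pow_def] using (Real.hasDerivAt_sqrt hz.ne').pow 3
    have heq : 3 * Real.sqrt z ^ 2 * (1 / (2 * Real.sqrt z)) = 3 / 2 * Real.sqrt (max z 0) := by
      rw [max_eq_left hz.le]
      have hs : Real.sqrt z ≠ 0 := by positivity
      field_simp
    rw [← heq]
    exact h1.congr_of_eventuallyEq hev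

lemma rpow_three_halves {x : ℝ} (hx : 0 ≤ x) : x ^ ((3:ℝ)/2) = Real.sqrt x ^ 3 := by
  rw [Real.sqrt_eq_rpow, ← Real.rpow_natCast (x ^ ((1:ℝ)/2)) 3, ← Real.rpow_mul hx]
  norm_num

theorem two_well_agmon_distance
    (F E R r θ : ℝ) (hF : 0 < F) (hE : E < 0) (hr : 0 < r) (hRr : 2 * r < R)
    (hθ : θ ∈ Set.Icc (0 : ℝ) (π / 2))
    (c₁ c₂ : EuclideanSpace ℝ (Fin 2))
    (hc₁0 : c₁ 0 = -(R / 2) * Real.sin θ) (hc₁1 : c₁ 1 = (R / 2) * (1 - Real.cos θ))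
    (hc₂0 : c₂ 0 = (R / 2) * Real.sin θ) (hc₂1 : c₂ 1 = (R / 2) * (1 + Real.cos θ))
    (habove : E / F < (R / 2) * (1 - Real.cos θ) - r)
    (D₁ D₂ : Set (EuclideanSpace ℝ (Fin 2)))
    (hD₁ : D₁ = Metric.closedBall c₁ r) (hD₂ : D₂ = Metric.closedBall c₂ r)
    (LA : (ℝ → EuclideanSpace ℝ (Fin 2)) → ℝ)
    (hLA : ∀ γ : ℝ → EuclideanSpace ℝ (Fin 2),
      LA γ = Real.sqrt 2 * ∫ t in (0:ℝ)..1,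
        Real.sqrt (max (F * γ t 1 - E) 0) *
          (if γ t ∈ D₁ ∪ D₂ then 0 else 1) * ‖deriv γ t‖) :
    sInf {L : ℝ | ∃ γ : ℝ → EuclideanSpace ℝ (Fin 2),
        ContDiff ℝ 1 γ ∧
        γ 0 ∈ Metric.sphere c₁ r ∪ Metric.sphere c₂ r ∧
        γ 1 ∈ {x : EuclideanSpace ℝ (Fin 2) | x 1 = E / F} ∧
        L = LA γ} =
      (1 / (3 * F)) * (F * R * (1 - Real.cos θ) - 2 * F * r - 2 * E) ^ ((3 : ℝ) / 2) := by
  have hFne : F ≠ 0 := hF.ne'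
  set h₀ : ℝ := (R / 2) * (1 - Real.cos θ) - r with hh₀
  have hEh : E / F < h₀ := habove
  have hApos : 0 < F * h₀ - E := by
    have := (div_lt_iff₀ hF).mp hEh
    linarith
  have hcos : 0 ≤ Real.cos θ :=
    Real.cos_nonneg_of_mem_Icc ⟨by linarith [hθ.1, Real.pi_pos], hθ.2⟩
  set g₀ : ℝ → ℝ := fun y => Real.sqrt (max (F * y - E) 0) with hg₀
  set G₀ : ℝ → ℝ := fun y => 2 / (3 * F) * Real.sqrt (max (F * y - E) 0) ^ 3 with hG₀
  have hG : ∀ y : ℝ, HasDerivAt G₀ (g₀ y) y := by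
    intro y
    have hu : HasDerivAt (fun y : ℝ => F * y - E) F y := by
      simpa using ((hasDerivAt_id y).const_mul F).sub_const E
    have h1 := (hasDerivAt_H (F * y - E)).comp y hu
    have h2 := h1.const_mul (2 / (3 * F))
    have heq : 2 / (3 * F) * (3 / 2 * Real.sqrt (max (F * y - E) 0) * F) = g₀ y := by
      field_simp [hg₀]
      ring
    simpa [hG₀, Function.comp, heq] using h2
  have hG0 : G₀ (E / F) = 0 := by
    have : F * (E / F) - E = 0 := by field_simp; ring
    simp [hG₀, this]
  have hGmono : ∀ y, h₀ ≤ y → G₀ h₀ ≤ G₀ y := by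
    intro y hy
    have hmax : max (F * h₀ - E) 0 ≤ max (F * y - E) 0 := by
      apply max_le_max _ le_rfl
      nlinarith
    have := pow_le_pow_left₀ (Real.sqrt_nonneg _) (Real.sqrt_le_sqrt hmax) 3
    have hc : 0 ≤ 2 / (3 * F) := by positivity
    simpa [hG₀] using mul_le_mul_of_nonneg_left this hc
  -- the target value
  have hval : (1 / (3 * F)) * (F * R * (1 - Real.cos θ) - 2 * F * r - 2 * E) ^ ((3 : ℝ) / 2)
      = Real.sqrt 2 * G₀ h₀ := by
    have hB : F * R * (1 - Real.cos θ) - 2 * F * r - 2 * E = 2 * (F * h₀ - E) := by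
      rw [hh₀]; ring
    rw [hB, rpow_three_halves (by positivity), Real.sqrt_mul (by norm_num)]
    have hmax : max (F * h₀ - E) 0 = F * h₀ - E := max_eq_left hApos.le
    have hs2 : Real.sqrt 2 ^ 2 = 2 := Real.sq_sqrt (by norm_num)
    have h23 : Real.sqrt 2 ^ 3 = 2 * Real.sqrt 2 := by rw [pow_succ, hs2]
    rw [hG₀]
    simp only [hmax]
    rw [mul_pow, h23]
    ring
  rw [hval]
  subst hD₁ hD₂
  -- points of the disks lie above height h₀
  have hmem : ∀ x : EuclideanSpace ℝ (Fin 2),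
      x ∈ Metric.closedBall c₁ r ∪ Metric.closedBall c₂ r → h₀ ≤ x 1 := by
    rintro x (hx | hx)
    · have hd : ‖x - c₁‖ ≤ r := by
        rw [← dist_eq_norm]; exact Metric.mem_closedBall.mp hx
      have h1 := (coord_le_norm (x - c₁) 1).trans hd
      rw [PiLp.sub_apply] at h1
      have := abs_le.mp h1
      rw [hc₁1] at this
      rw [hh₀]
      linarith [this.1]
    · have hd : ‖x - c₂‖ ≤ r := by
        rw [← dist_eq_norm]; exact Metric.mem_closedBall.mp hx
      have h1 := (coord_le_norm (x - c₂) 1).trans hd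
      rw [PiLp.sub_apply] at h1
      have := abs_le.mp h1
      rw [hc₂1] at this
      rw [hh₀]
      nlinarith [this.1, mul_nonneg (by linarith : (0:ℝ) ≤ R / 2) hcos]
  apply IsLeast.csInf_eq
  constructor
  · -- the optimal vertical path
    set e : EuclideanSpace ℝ (Fin 2) := EuclideanSpace.single (1 : Fin 2) (1:ℝ) with he
    set γ : ℝ → EuclideanSpace ℝ (Fin 2) :=
      fun t => c₁ + (-r + t * (E / F - h₀)) • e with hγdef
    have hγd : ∀ t, HasDerivAt γ ((E / F - h₀) • e) t := by
      intro t
      have h1 : HasDerivAt (fun t : ℝ => -r + t * (E / F - h₀)) (E / F - h₀) t := by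
        simpa using ((hasDerivAt_id t).mul_const (E / F - h₀)).const_add (-r)
      exact (h1.smul_const e).const_add c₁
    have hderiv : deriv γ = fun _ => (E / F - h₀) • e := funext fun t => (hγd t).deriv
    have hγ1coord : ∀ t, γ t 1 = h₀ + t * (E / F - h₀) := by
      intro t
      rw [hγdef]
      dsimp only
      rw [PiLp.add_apply, PiLp.smul_apply, he, EuclideanSpace.single_apply]
      rw [if_pos rfl, smul_eq_mul, hc₁1, hh₀]
      ring
    refine ⟨γ, ?_, ?_, ?_, ?_⟩
    · rw [hγdef]
      exact contDiff_const.add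
        ((contDiff_const.add (contDiff_id.mul contDiff_const)).smul contDiff_const)
    · left
      have hγ0 : γ 0 = c₁ + (-r : ℝ) • e := by
        rw [hγdef]; norm_num
      rw [hγ0, Metric.mem_sphere, dist_eq_norm, add_sub_cancel_left, norm_smul, he,
        EuclideanSpace.norm_single]
      simp [abs_of_pos hr]
    · show γ 1 1 = E / F
      rw [hγ1coord]; ring
    · rw [hLA]
      have hnd : ∀ t : ℝ, ‖deriv γ t‖ = h₀ - E / F := by
        intro t
        rw [hderiv]
        dsimp only
        rw [norm_smul, he, EuclideanSpace.norm_single, norm_one, mul_one,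
          Real.norm_eq_abs, abs_of_nonpos (by linarith)]
        ring
      have hcongr : (∫ t in (0:ℝ)..1, Real.sqrt (max (F * γ t 1 - E) 0) *
          (if γ t ∈ Metric.closedBall c₁ r ∪ Metric.closedBall c₂ r then 0 else 1) *
            ‖deriv γ t‖)
          = ∫ t in (0:ℝ)..1,
              -(Real.sqrt (max (F * (h₀ + t * (E / F - h₀)) - E) 0) * (E / F - h₀)) := by
        rw [intervalIntegral.integral_of_le zero_le_one,
          intervalIntegral.integral_of_le zero_le_one]
        apply setIntegral_congr_fun measurableSet_Ioc
        intro t ht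
        have hlt : γ t 1 < h₀ := by
          rw [hγ1coord]
          nlinarith [ht.1, ht.2, hEh]
        have hout : γ t ∉ Metric.closedBall c₁ r ∪ Metric.closedBall c₂ r :=
          fun h => absurd (hmem _ h) (not_le.mpr hlt)
        dsimp only
        rw [if_neg hout, mul_one, hnd t, hγ1coord]
        ring
      have hψaff : ∀ t : ℝ, HasDerivAt (fun t : ℝ => h₀ + t * (E / F - h₀)) (E / F - h₀) t :=
        fun t => by simpa using ((hasDerivAt_id t).mul_const (E / F - h₀)).const_add h₀
      have hder : ∀ x ∈ Set.uIcc (0:ℝ) 1, HasDerivAt (fun t => -G₀ (h₀ + t * (E / F - h₀)))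
          (-(Real.sqrt (max (F * (h₀ + x * (E / F - h₀)) - E) 0) * (E / F - h₀))) x := by
        intro x _
        have := ((hG (h₀ + x * (E / F - h₀))).comp x (hψaff x)).neg
        simp only [hg₀] at this; exact this
      have hcont : Continuous (fun t : ℝ =>
          -(Real.sqrt (max (F * (h₀ + t * (E / F - h₀)) - E) 0) * (E / F - h₀))) := by
        apply Continuous.neg
        apply Continuous.mul _ continuous_const
        exact Real.continuous_sqrt.comp
          (((continuous_const.mul
            (continuous_const.add (continuous_id.mul continuous_const))).sub
              continuous_const).max continuous_const)
      have hFTC := intervalIntegral.integral_eq_sub_of_hasDerivAt hder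
        (hcont.intervalIntegrable (μ := volume) 0 1)
      rw [hcongr, hFTC]
      have h1 : h₀ + 1 * (E / F - h₀) = E / F := by ring
      have h0' : h₀ + 0 * (E / F - h₀) = h₀ := by ring
      rw [h1, h0', hG0]
      ring
  · -- lower bound
    rintro L ⟨γ, hγ, hγ0, hγ1, rfl⟩
    rw [hLA]
    simp only [Set.mem_setOf_eq] at hγ1
    have hγd : ∀ t, HasDerivAt γ (deriv γ t) t := fun t =>
      ((hγ.differentiable one_ne_zero) t).hasDerivAt
    have hdc : Continuous (deriv γ) := hγ.continuous_deriv le_rfl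
    set ψ : ℝ → ℝ := fun t => γ t 1 with hψ
    have hψd : ∀ t, HasDerivAt ψ (deriv γ t 1) t := by
      intro t
      have h := ((EuclideanSpace.proj (1 : Fin 2) : EuclideanSpace ℝ (Fin 2) →L[ℝ] ℝ
        ).hasFDerivAt (x := γ t)).comp_hasDerivAt t (hγd t)
      simpa [hψ, Function.comp_def, PiLp.proj_apply] using h
    have hψc : Continuous ψ := by
      have := (EuclideanSpace.proj (1 : Fin 2) :
        EuclideanSpace ℝ (Fin 2) →L[ℝ] ℝ).continuous.comp hγ.continuous
      simpa [hψ, Function.comp_def, PiLp.proj_apply] using this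
    have hψ1 : ψ 1 = E / F := hγ1
    have hψ0 : h₀ ≤ ψ 0 := by
      rcases hγ0 with h | h
      · exact hmem _ (Or.inl (Metric.sphere_subset_closedBall h))
      · exact hmem _ (Or.inr (Metric.sphere_subset_closedBall h))
    set S' : Set ℝ := Set.Icc (0:ℝ) 1 ∩ ψ ⁻¹' Set.Ici h₀ with hS'
    have hS'cl : IsClosed S' := isClosed_Icc.inter (isClosed_Ici.preimage hψc)
    have hS'ne : S'.Nonempty := ⟨0, ⟨le_refl 0, zero_le_one⟩, hψ0⟩
    have hS'bdd : BddAbove S' := ⟨1, fun t ht => ht.1.2⟩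
    set τ : ℝ := sSup S' with hτdef
    have hτS : τ ∈ S' := hS'cl.csSup_mem hS'ne hS'bdd
    obtain ⟨⟨hτ0, hτ1⟩, hτh'⟩ := hτS
    have hτh : h₀ ≤ ψ τ := hτh'
    have hτlt : τ < 1 := by
      rcases lt_or_eq_of_le hτ1 with h | h
      · exact h
      · exfalso
        rw [h] at hτh
        rw [hψ1] at hτh
        linarith
    have hafter : ∀ t, τ < t → t ≤ 1 → ψ t < h₀ := by
      intro t h1t h2t
      by_contra hcon
      push_neg at hcon
      have ht : t ∈ S' := ⟨⟨le_trans hτ0 h1t.le, h2t⟩, hcon⟩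
      exact absurd (le_csSup hS'bdd ht) (not_le.mpr h1t)
    set f₀ : ℝ → ℝ := fun t => Real.sqrt (max (F * γ t 1 - E) 0) *
      (if γ t ∈ Metric.closedBall c₁ r ∪ Metric.closedBall c₂ r then 0 else 1) *
        ‖deriv γ t‖ with hf₀
    have hf₀nonneg : ∀ t, 0 ≤ f₀ t := by
      intro t
      rw [hf₀]
      dsimp only
      by_cases h : γ t ∈ Metric.closedBall c₁ r ∪ Metric.closedBall c₂ r
      · simp [h]
      · simp only [h, if_false, mul_one]
        positivity
    have hucont : Continuous (fun t => Real.sqrt (max (F * γ t 1 - E) 0) * ‖deriv γ t‖) := by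
      apply Continuous.mul
      · exact Real.continuous_sqrt.comp
          (((continuous_const.mul hψc).sub continuous_const).max continuous_const)
      · exact hdc.norm
    have hwcont : Continuous (fun t => -(Real.sqrt (max (F * γ t 1 - E) 0) * deriv γ t 1)) := by
      apply Continuous.neg
      apply Continuous.mul
      · exact Real.continuous_sqrt.comp
          (((continuous_const.mul hψc).sub continuous_const).max continuous_const)
      · have := (EuclideanSpace.proj (1 : Fin 2) :
          EuclideanSpace ℝ (Fin 2) →L[ℝ] ℝ).continuous.comp hdc
        simpa [Function.comp_def, PiLp.proj_apply] using this
    have hint : ∀ a b : ℝ, IntervalIntegrable f₀ volume a b := by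
      intro a b
      have hfeq : f₀ = ({t : ℝ | γ t ∈ Metric.closedBall c₁ r ∪ Metric.closedBall c₂ r}ᶜ).indicator
          (fun t => Real.sqrt (max (F * γ t 1 - E) 0) * ‖deriv γ t‖) := by
        funext t
        rw [hf₀]
        by_cases h : γ t ∈ Metric.closedBall c₁ r ∪ Metric.closedBall c₂ r
        · dsimp only
          rw [if_pos h, Set.indicator_of_notMem (by simp only [Set.mem_compl_iff, Set.mem_setOf_eq, not_not]; exact h), mul_zero, zero_mul]
        · dsimp only
          rw [if_neg h, Set.indicator_of_mem (by simp only [Set.mem_compl_iff, Set.mem_setOf_eq]; exact h), mul_one]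
      have hms : MeasurableSet
          ({t : ℝ | γ t ∈ Metric.closedBall c₁ r ∪ Metric.closedBall c₂ r}ᶜ) :=
        ((Metric.isClosed_closedBall.union Metric.isClosed_closedBall).preimage
          hγ.continuous).measurableSet.compl
      rw [intervalIntegrable_iff, hfeq]
      exact (intervalIntegrable_iff.mp (hucont.intervalIntegrable (μ := volume) a b)).indicator hms
    have key : G₀ h₀ ≤ ∫ t in (0:ℝ)..1, f₀ t := by
      have hsplit : (∫ t in (0:ℝ)..τ, f₀ t) + ∫ t in τ..1, f₀ t = ∫ t in (0:ℝ)..1, f₀ t :=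
        intervalIntegral.integral_add_adjacent_intervals (hint 0 τ) (hint τ 1)
      have h1 : 0 ≤ ∫ t in (0:ℝ)..τ, f₀ t :=
        intervalIntegral.integral_nonneg hτ0 (fun u _ => hf₀nonneg u)
      have h2 : (∫ t in τ..1, -(Real.sqrt (max (F * γ t 1 - E) 0) * deriv γ t 1))
          ≤ ∫ t in τ..1, f₀ t := by
        rw [intervalIntegral.integral_of_le hτlt.le, intervalIntegral.integral_of_le hτlt.le]
        apply setIntegral_mono_on
        · have := intervalIntegrable_iff.mp (hwcont.intervalIntegrable (μ := volume) τ 1)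
          rwa [Set.uIoc_of_le hτlt.le] at this
        · have := intervalIntegrable_iff.mp (hint τ 1)
          rwa [Set.uIoc_of_le hτlt.le] at this
        · exact measurableSet_Ioc
        · intro t ht
          have hψt : ψ t < h₀ := hafter t ht.1 ht.2
          have hout : γ t ∉ Metric.closedBall c₁ r ∪ Metric.closedBall c₂ r :=
            fun hmem' => absurd (hmem _ hmem') (not_le.mpr hψt)
          rw [hf₀]
          dsimp only
          rw [if_neg hout, mul_one]
          have habs : |deriv γ t 1| ≤ ‖deriv γ t‖ := coord_le_norm (deriv γ t) 1
          have hs : 0 ≤ Real.sqrt (max (F * γ t 1 - E) 0) := Real.sqrt_nonneg _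
          have h1' : -(deriv γ t 1) ≤ ‖deriv γ t‖ := le_trans (neg_le_abs _) habs
          calc -(Real.sqrt (max (F * γ t 1 - E) 0) * deriv γ t 1)
              = Real.sqrt (max (F * γ t 1 - E) 0) * (-(deriv γ t 1)) := by ring
            _ ≤ Real.sqrt (max (F * γ t 1 - E) 0) * ‖deriv γ t‖ :=
              mul_le_mul_of_nonneg_left h1' hs
      have h3 : (∫ t in τ..1, -(Real.sqrt (max (F * γ t 1 - E) 0) * deriv γ t 1))
          = G₀ (ψ τ) := by
        have hder : ∀ x ∈ Set.uIcc τ (1:ℝ), HasDerivAt (fun t => -G₀ (ψ t))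
            (-(Real.sqrt (max (F * γ x 1 - E) 0) * deriv γ x 1)) x := by
          intro x _
          have := ((hG (ψ x)).comp x (hψd x)).neg
          simp only [hg₀] at this; exact this
        have hFTC := intervalIntegral.integral_eq_sub_of_hasDerivAt hder
          (hwcont.intervalIntegrable (μ := volume) τ 1)
        rw [hFTC, hψ1, hG0]
        ring
      have h4 : G₀ h₀ ≤ G₀ (ψ τ) := hGmono _ hτh
      linarith
    exact mul_le_mul_of_nonneg_left key (Real.sqrt_nonneg 2)
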